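/- arXiv:0707.2421 — 2 statements merged into one kernel-verified Lean document; each statement's English description precedes it below -/
import Mathlib

section
/- Let P be a two-color grid poset that decomposes as P = P1 ◁ P2 ◁ ... ◁ Pk, let L = J_color(P) and, for 1 ≤ i ≤ k, let L_i = J_color(P_i). Then for every order ideal s of P and every color γ ∈ {α, β}: ρ_γ(s) computed in L equals the sum over i = 1,...,k of ρ_γ(s ∩ P_i) computed in L_i; l_γ(s) computed in L equals the sum over i of l_γ(s ∩ P_i) computed in L_i; and consequently wt(s) computed in L equals the sum over i of wt(s ∩ P_i) computed in L_i. -/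
/-- The two colors (simple-root labels) `α` and `β`. -/
inductive TwoColor : Type
  | alpha : TwoColor
  | beta : TwoColor
  deriving DecidableEq

/-- Lengths of paths of `r`-edges ending at `t`. -/
def chainsEndingAt {V : Type*} (r : V → V → Prop) (t : V) : Set ℕ :=
  {n : ℕ | ∃ c : ℕ → V, c n = t ∧ ∀ i : ℕ, i < n → r (c i) (c (i + 1))}

/-- Lengths of paths of `r`-edges starting at `t`. -/
def chainsStartingAt {V : Type*} (r : V → V → Prop) (t : V) : Set ℕ :=
  {n : ℕ | ∃ c : ℕ → V, c 0 = t ∧ ∀ i : ℕ, i < n → r (c i) (c (i + 1))}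

/-- `ρ`: the maximum number of edges in a chain of `r`-edges ending at `t`. -/
noncomputable def rhoOf {V : Type*} (r : V → V → Prop) (t : V) : ℕ :=
  sSup (chainsEndingAt r t)

/-- `δ`: the maximum number of edges in a chain of `r`-edges starting at `t`. -/
noncomputable def deltaOf {V : Type*} (r : V → V → Prop) (t : V) : ℕ :=
  sSup (chainsStartingAt r t)

/-- `l = ρ + δ`. -/
noncomputable def lenOf {V : Type*} (r : V → V → Prop) (t : V) : ℕ :=
  rhoOf r t + deltaOf r t

/-- The weight `wt(t) = (ρ_α(t) − δ_α(t), ρ_β(t) − δ_β(t))` of an element of an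
edge-colored poset whose (colored) covering relations are given by `cov`. -/
noncomputable def wtOf {V : Type*} (cov : TwoColor → V → V → Prop) (t : V) : ℤ × ℤ :=
  ((rhoOf (cov TwoColor.alpha) t : ℤ) - (deltaOf (cov TwoColor.alpha) t : ℤ),
   (rhoOf (cov TwoColor.beta) t : ℤ) - (deltaOf (cov TwoColor.beta) t : ℤ))

/-- The structure condition for a `2 × 2` integer matrix `M` (given by its rows
`M γ` for `γ ∈ {α, β}`): along any covering edge of color `γ`, the weight changes by `M γ`. -/
def StructureCondition {V : Type*} (cov : TwoColor → V → V → Prop)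
    (M : TwoColor → ℤ × ℤ) : Prop :=
  ∀ (γ : TwoColor) (s t : V), cov γ s t → wtOf cov t = wtOf cov s + M γ

/-- The elements of the distributive lattice `J(P)`: order ideals (lower sets) of `P`. -/
abbrev OrderIdeal (V : Type*) [PartialOrder V] : Type _ := {I : Set V // IsLowerSet I}

/-- The colored covering relation of `J_color(P)` for a vertex-colored poset `P`:
`s ⋖ t` with color `γ` when `t ∖ s` is a single vertex of color `γ`. -/
def idealCov {V : Type*} [PartialOrder V] (vcolor : V → TwoColor) (γ : TwoColor)
    (s t : OrderIdeal V) : Prop :=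
  ∃ u : V, vcolor u = γ ∧ u ∉ s.1 ∧ t.1 = insert u s.1

/-- Two vertices are in the same connected component of the Hasse diagram of a
poset when they are joined by a path of covering edges (in either direction). -/
def HasseConnected {V : Type*} [PartialOrder V] (u v : V) : Prop :=
  Relation.ReflTransGen (fun x y : V => x ⋖ y ∨ y ⋖ x) u v

/-- `chain : P → {1, …, m}` is a chain function making the finite poset `P` a grid
poset: each fiber of `chain` is a chain of `P`, and along any covering relation
`u ⋖ v` either `chain u = chain v` or `chain u = chain v + 1`. -/
def IsGridPoset {V : Type*} [PartialOrder V] (m : ℕ) (chain : V → ℕ) : Prop :=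
  1 ≤ m ∧ (∀ v : V, 1 ≤ chain v ∧ chain v ≤ m) ∧
    (∀ i : ℕ, IsChain (· ≤ ·) {v : V | chain v = i}) ∧
    (∀ u v : V, u ⋖ v → chain u = chain v ∨ chain u = chain v + 1)

/-- `color` is a two-color function for the grid poset `(P, chain)`: it is constant
on the fibers of `chain`, and vertices in the same connected component of the Hasse
diagram lying on adjacent chains get different colors. -/
def IsTwoColoring {V : Type*} [PartialOrder V] (chain : V → ℕ) (color : V → TwoColor) : Prop :=
  (∀ u v : V, chain u = chain v → color u = color v) ∧
  (∀ u v : V, HasseConnected u v → chain u = chain v + 1 → color u ≠ color v)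

/-- `idx` exhibits the decomposition `P = P₁ ◁ P₂ ◁ ⋯ ◁ P_k`, where
`P_i = idx⁻¹(i)`: each prefix is an order ideal of the remaining poset
(equivalently, `idx` is monotone), each piece is nonempty, and whenever `u` is a
maximal (resp. minimal) element of the piece `P_i` and `v` is a maximal
(resp. minimal) element of the union of the later pieces, `chain u ≤ chain v`. -/
def IsDecomposition {V : Type*} [PartialOrder V] {k : ℕ} (chain : V → ℕ)
    (idx : V → Fin k) : Prop :=
  (∀ u v : V, u ≤ v → idx u ≤ idx v) ∧
  (∀ i : Fin k, ∃ v : V, idx v = i) ∧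
  (∀ (i : Fin k) (u v : V), idx u = i → i < idx v →
      (∀ w : V, idx w = i → ¬u < w) → (∀ w : V, i < idx w → ¬v < w) → chain u ≤ chain v) ∧
  (∀ (i : Fin k) (u v : V), idx u = i → i < idx v →
      (∀ w : V, idx w = i → ¬w < u) → (∀ w : V, i < idx w → ¬w < v) → chain u ≤ chain v)

/-- The restriction `s ∩ P_i` of an order ideal `s` of `P` to the piece
`P_i = idx⁻¹(i)`, as an order ideal of the subposet `P_i`. -/
def restrictIdeal {V : Type*} [PartialOrder V] {k : ℕ} (idx : V → Fin k)
    (s : OrderIdeal V) (i : Fin k) : OrderIdeal {v : V // idx v = i} :=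
  ⟨{x : {v : V // idx v = i} | (x : V) ∈ s.1}, fun _ _ hba ha => s.2 hba ha⟩

/-- The restriction of the vertex coloring to the piece `P_i = idx⁻¹(i)`. -/
def subColor {V : Type*} {k : ℕ} (idx : V → Fin k) (color : V → TwoColor) (i : Fin k)
    (x : {v : V // idx v = i}) : TwoColor :=
  color x.1

/-! ### Auxiliary development -/

set_option linter.unusedSectionVars false
section Lemma31

open Set

variable {V : Type*} [PartialOrder V] [Fintype V]

/-- The canonical maximal "removable set". -/
def USet (color : V → TwoColor) (γ : TwoColor) (s : Set V) : Set V :=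
  {u | u ∈ s ∧ ∀ v ∈ s, u ≤ v → color v = γ}

/-- The canonical maximal "addable set". -/
def DSet (color : V → TwoColor) (γ : TwoColor) (s : Set V) : Set V :=
  {u | u ∉ s ∧ ∀ v, v ≤ u → v ∉ s → color v = γ}

lemma exists_maximal_mem {s : Set V} (hs : s.Nonempty) : ∃ a ∈ s, ∀ b ∈ s, ¬a < b := by
  classical
  obtain ⟨a, ha, h⟩ := s.toFinite.toFinset.exists_maximal
    (by rwa [Set.Finite.toFinset_nonempty])
  rw [Set.Finite.mem_toFinset] at ha
  exact ⟨a, ha, fun b hb hlt => lt_irrefl a (hlt.trans_le (h (s.toFinite.mem_toFinset.mpr hb) hlt.le))⟩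

lemma exists_minimal_mem {s : Set V} (hs : s.Nonempty) : ∃ a ∈ s, ∀ b ∈ s, ¬b < a := by
  classical
  obtain ⟨a, ha, h⟩ := s.toFinite.toFinset.exists_minimal
    (by rwa [Set.Finite.toFinset_nonempty])
  rw [Set.Finite.mem_toFinset] at ha
  exact ⟨a, ha, fun b hb hlt => lt_irrefl a ((h (s.toFinite.mem_toFinset.mpr hb) hlt.le).trans_lt hlt)⟩

lemma exists_maximal_above (v : V) : ∃ w, v ≤ w ∧ ∀ x : V, ¬w < x := by
  obtain ⟨w, hw, hmax⟩ := exists_maximal_mem (s := {x : V | v ≤ x}) ⟨v, le_refl v⟩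
  exact ⟨w, hw, fun x hx => hmax x (le_trans hw hx.le) hx⟩

variable (color : V → TwoColor) (γ : TwoColor)

lemma mem_chainsEndingAt_zero (s : OrderIdeal V) :
    0 ∈ chainsEndingAt (idealCov color γ) s :=
  ⟨fun _ => s, rfl, fun i hi => absurd hi (Nat.not_lt_zero i)⟩

lemma rho_bound :
    ∀ (n : ℕ) (s : OrderIdeal V), n ∈ chainsEndingAt (idealCov color γ) s →
      n ≤ (USet color γ s.1).ncard := by
  intro n
  induction n with
  | zero => exact fun s _ => Nat.zero_le _
  | succ n IH =>
    rintro s ⟨c, hc, hstep⟩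
    have hedge := hstep n (Nat.lt_succ_self n)
    rw [hc] at hedge
    obtain ⟨u, hγ, hus, hins⟩ := hedge
    have hprev : n ≤ (USet color γ (c n).1).ncard :=
      IH (c n) ⟨c, rfl, fun i hi => hstep i (hi.trans (Nat.lt_succ_self n))⟩
    have h1 : USet color γ (c n).1 ⊆ USet color γ s.1 := by
      rintro x ⟨hx, hall⟩
      refine ⟨by rw [hins]; exact Set.mem_insert_of_mem _ hx, ?_⟩
      intro v hv hxv
      rw [hins] at hv
      rcases hv with rfl | hv
      · exact hγ
      · exact hall v hv hxv
    have hu : u ∈ USet color γ s.1 := by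
      refine ⟨by rw [hins]; exact Set.mem_insert _ _, ?_⟩
      intro v hv huv
      rw [hins] at hv
      rcases hv with rfl | hv
      · exact hγ
      · exact absurd ((c n).2 huv hv) hus
    have hss : USet color γ (c n).1 ⊂ USet color γ s.1 :=
      ⟨h1, fun hsub => hus (hsub hu).1⟩
    have := Set.ncard_lt_ncard hss (Set.toFinite _)
    omega

lemma rho_mem :
    ∀ (n : ℕ) (s : OrderIdeal V), (USet color γ s.1).ncard = n →
      n ∈ chainsEndingAt (idealCov color γ) s := by
  intro n
  induction n with
  | zero => exact fun s _ => mem_chainsEndingAt_zero color γ s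
  | succ n IH =>
    intro s hcard
    have hne : (USet color γ s.1).Nonempty :=
      Set.nonempty_of_ncard_ne_zero (by omega)
    obtain ⟨u, hu, humax⟩ := exists_maximal_mem hne
    have humaxs : ∀ v ∈ s.1, ¬u < v := by
      intro v hv hlt
      refine humax v ⟨hv, ?_⟩ hlt
      intro w hw hvw
      exact hu.2 w hw (le_trans hlt.le hvw)
    have hlow : IsLowerSet (s.1 \ {u}) := by
      rintro a b hba ⟨has, hane⟩
      refine ⟨s.2 hba has, ?_⟩
      intro hbu
      rw [Set.mem_singleton_iff] at hbu
      subst hbu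
      rcases eq_or_lt_of_le hba with rfl | hlt
      · exact hane rfl
      · exact humaxs a has hlt
    set s' : OrderIdeal V := ⟨s.1 \ {u}, hlow⟩ with hs'
    have hUs' : USet color γ s'.1 = USet color γ s.1 \ {u} := by
      ext x
      constructor
      · rintro ⟨⟨hx, hxu⟩, hall⟩
        refine ⟨⟨hx, ?_⟩, hxu⟩
        intro v hv hxv
        rcases eq_or_ne v u with rfl | hvu
        · exact hu.2 v hu.1 le_rfl
        · exact hall v ⟨hv, hvu⟩ hxv
      · rintro ⟨⟨hx, hall⟩, hxu⟩
        refine ⟨⟨hx, hxu⟩, ?_⟩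
        rintro v ⟨hv, _⟩ hxv
        exact hall v hv hxv
    have hcard' : (USet color γ s'.1).ncard = n := by
      rw [hUs', Set.ncard_diff_singleton_of_mem hu, hcard]; omega
    obtain ⟨c, hc0, hstep⟩ := IH s' hcard'
    refine ⟨fun i => if i ≤ n then c i else s, by simp, ?_⟩
    intro i hi
    rcases Nat.lt_or_ge i n with hin | hin
    · simp only [if_pos hin.le, if_pos (Nat.succ_le_of_lt hin)]
      exact hstep i hin
    · have hieq : i = n := by omega
      subst hieq
      simp only [if_pos le_rfl, if_neg (by omega : ¬i + 1 ≤ i)]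
      rw [hc0]
      refine ⟨u, hu.2 u hu.1 le_rfl, by simp [hs'], ?_⟩
      ext x
      simp only [hs', Set.mem_insert_iff, Set.mem_diff, Set.mem_singleton_iff]
      constructor
      · intro hx
        by_cases hxu : x = u
        · exact Or.inl hxu
        · exact Or.inr ⟨hx, hxu⟩
      · rintro (rfl | ⟨hx, _⟩)
        · exact hu.1
        · exact hx

lemma rho_eq (s : OrderIdeal V) :
    rhoOf (idealCov color γ) s = (USet color γ s.1).ncard := by
  apply le_antisymm
  · exact csSup_le ⟨0, mem_chainsEndingAt_zero color γ s⟩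
      (fun n hn => rho_bound color γ n s hn)
  · exact le_csSup ⟨(USet color γ s.1).ncard, fun n hn => rho_bound color γ n s hn⟩
      (rho_mem color γ _ s rfl)

lemma mem_chainsStartingAt_zero (s : OrderIdeal V) :
    0 ∈ chainsStartingAt (idealCov color γ) s :=
  ⟨fun _ => s, rfl, fun i hi => absurd hi (Nat.not_lt_zero i)⟩

lemma delta_bound :
    ∀ (n : ℕ) (s : OrderIdeal V), n ∈ chainsStartingAt (idealCov color γ) s →
      n ≤ (DSet color γ s.1).ncard := by
  intro n
  induction n with
  | zero => exact fun s _ => Nat.zero_le _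
  | succ n IH =>
    rintro s ⟨c, hc, hstep⟩
    have hedge := hstep 0 (Nat.succ_pos n)
    rw [hc] at hedge
    obtain ⟨u, hγ, hus, hins⟩ := hedge
    have hprev : n ≤ (DSet color γ (c 1).1).ncard :=
      IH (c 1) ⟨fun t => c (t + 1), rfl, fun i hi => hstep (i + 1) (by omega)⟩
    have hsub : s.1 ⊆ (c 1).1 := by rw [hins]; exact Set.subset_insert _ _
    have h1 : DSet color γ (c 1).1 ⊆ DSet color γ s.1 := by
      rintro x ⟨hx, hall⟩
      have hxs : x ∉ s.1 := fun h => hx (hsub h)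
      refine ⟨hxs, ?_⟩
      intro v hvx hvs
      by_cases hvc : v ∈ (c 1).1
      · rw [hins] at hvc
        rcases hvc with rfl | hvc
        · exact hγ
        · exact absurd hvc hvs
      · exact hall v hvx hvc
    have hu : u ∈ DSet color γ s.1 := by
      refine ⟨hus, ?_⟩
      intro v hvu hvs
      have hvc : v ∈ (c 1).1 := (c 1).2 hvu (by rw [hins]; exact Set.mem_insert _ _)
      rw [hins] at hvc
      rcases hvc with rfl | hvc
      · exact hγ
      · exact absurd hvc hvs
    have hss : DSet color γ (c 1).1 ⊂ DSet color γ s.1 :=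
      ⟨h1, fun hsub2 => (hsub2 hu).1 (by rw [hins]; exact Set.mem_insert _ _)⟩
    have := Set.ncard_lt_ncard hss (Set.toFinite _)
    omega

lemma delta_mem :
    ∀ (n : ℕ) (s : OrderIdeal V), (DSet color γ s.1).ncard = n →
      n ∈ chainsStartingAt (idealCov color γ) s := by
  intro n
  induction n with
  | zero => exact fun s _ => mem_chainsStartingAt_zero color γ s
  | succ n IH =>
    intro s hcard
    have hne : (DSet color γ s.1).Nonempty :=
      Set.nonempty_of_ncard_ne_zero (by omega)
    obtain ⟨u, hu, humin⟩ := exists_minimal_mem hne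
    have hγu : color u = γ := hu.2 u le_rfl hu.1
    have humins : ∀ v, v < u → v ∈ s.1 := by
      intro v hlt
      by_contra hvs
      refine humin v ⟨hvs, ?_⟩ hlt
      intro w hwv hws
      exact hu.2 w (le_trans hwv hlt.le) hws
    have hupp : IsLowerSet (insert u s.1) := by
      rintro a b hba (rfl | has)
      · rcases eq_or_lt_of_le hba with rfl | hlt
        · exact Set.mem_insert _ _
        · exact Set.mem_insert_of_mem _ (humins b hlt)
      · exact Set.mem_insert_of_mem _ (s.2 hba has)
    set t : OrderIdeal V := ⟨insert u s.1, hupp⟩ with ht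
    have hDt : DSet color γ t.1 = DSet color γ s.1 \ {u} := by
      ext x
      constructor
      · rintro ⟨hx, hall⟩
        have hxs : x ∉ s.1 := fun h => hx (Set.mem_insert_of_mem _ h)
        have hxu : x ≠ u := fun h => hx (h ▸ Set.mem_insert _ _)
        refine ⟨⟨hxs, ?_⟩, hxu⟩
        intro v hvx hvs
        rcases eq_or_ne v u with rfl | hvu
        · exact hγu
        · exact hall v hvx (by simp [ht, Set.mem_insert_iff, hvu, hvs])
      · rintro ⟨⟨hx, hall⟩, hxu⟩
        refine ⟨by simp [ht, Set.mem_insert_iff, hx, (by simpa using hxu : x ≠ u)], ?_⟩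
        intro v hvx hvt
        have hvs : v ∉ s.1 := fun h => hvt (Set.mem_insert_of_mem _ h)
        exact hall v hvx hvs
    have hcard' : (DSet color γ t.1).ncard = n := by
      rw [hDt, Set.ncard_diff_singleton_of_mem hu, hcard]; omega
    obtain ⟨c, hc0, hstep⟩ := IH t hcard'
    refine ⟨fun i => if i = 0 then s else c (i - 1), rfl, ?_⟩
    intro i hi
    rcases Nat.eq_zero_or_pos i with rfl | hipos
    · simp only [if_pos rfl, if_neg (Nat.one_ne_zero)]
      rw [(by norm_num : 1 - 1 = 0), hc0]
      exact ⟨u, hγu, hu.1, rfl⟩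
    · have h1 : ¬i = 0 := by omega
      have h2 : ¬i + 1 = 0 := by omega
      simp only [if_neg h1, if_neg h2]
      have : i + 1 - 1 = (i - 1) + 1 := by omega
      rw [this]
      exact hstep (i - 1) (by omega)

lemma delta_eq (s : OrderIdeal V) :
    deltaOf (idealCov color γ) s = (DSet color γ s.1).ncard := by
  apply le_antisymm
  · exact csSup_le ⟨0, mem_chainsStartingAt_zero color γ s⟩
      (fun n hn => delta_bound color γ n s hn)
  · exact le_csSup ⟨(DSet color γ s.1).ncard, fun n hn => delta_bound color γ n s hn⟩
      (delta_mem color γ _ s rfl)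

end Lemma31
section GridLemmas

open Set

variable {V : Type*} [PartialOrder V] [Fintype V] {m k : ℕ}
variable (chain : V → ℕ) (color : V → TwoColor) (idx : V → Fin k)

lemma chain_anti (hgrid : IsGridPoset m chain) :
    ∀ v u : V, u ≤ v → chain v ≤ chain u := fun v =>
  WellFounded.induction (wellFounded_lt (α := V))
    (C := fun v => ∀ u, u ≤ v → chain v ≤ chain u) v
    (fun x IH u hu => by
      rcases eq_or_lt_of_le hu with rfl | hlt
      · exact le_rfl
      · obtain ⟨y, hy1, hy2⟩ := hlt.exists_le_covby
        have h1 : chain x ≤ chain y := by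
          rcases hgrid.2.2.2 y x hy2 with h | h <;> omega
        exact h1.trans (IH y hy2.lt u hy1))

/-- Climb from `u` inside its piece to a piece-maximal element; along the way every
chain value between `chain` of the endpoint and `chain u` is attained inside the piece. -/
lemma climb_piece (hgrid : IsGridPoset m chain) (hdec : IsDecomposition chain idx) (i : Fin k) :
    ∀ u : V, idx u = i →
      ∃ x : V, u ≤ x ∧ idx x = i ∧ (∀ w, idx w = i → ¬x < w) ∧
        ∀ c, chain x ≤ c → c ≤ chain u → ∃ y, u ≤ y ∧ idx y = i ∧ chain y = c := fun u =>
  WellFounded.induction (wellFounded_gt (α := V))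
    (C := fun u => idx u = i →
      ∃ x : V, u ≤ x ∧ idx x = i ∧ (∀ w, idx w = i → ¬x < w) ∧
        ∀ c, chain x ≤ c → c ≤ chain u → ∃ y, u ≤ y ∧ idx y = i ∧ chain y = c) u
    (fun x IH hx => by
      by_cases hmax : ∀ w, idx w = i → ¬x < w
      · refine ⟨x, le_rfl, hx, hmax, fun c h1 h2 => ⟨x, le_rfl, hx, le_antisymm h1 h2⟩⟩
      · push_neg at hmax
        obtain ⟨w, hwi, hxw⟩ := hmax
        obtain ⟨y, hy1, hy2⟩ := hxw.exists_covby_le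
        have hyi : idx y = i :=
          le_antisymm (hwi ▸ hdec.1 y w hy2) (hx ▸ hdec.1 x y hy1.le)
        obtain ⟨z, hz1, hz2, hz3, hzval⟩ := IH y hy1.lt hyi
        refine ⟨z, hy1.le.trans hz1, hz2, hz3, ?_⟩
        intro c hc1 hc2
        rcases eq_or_lt_of_le hc2 with rfl | hc2'
        · exact ⟨x, le_rfl, hx, rfl⟩
        · have hcy : c ≤ chain y := by
            rcases hgrid.2.2.2 x y hy1 with h | h <;> omega
          obtain ⟨y', h1, h2, h3⟩ := hzval c hc1 hcy
          exact ⟨y', hy1.le.trans h1, h2, h3⟩)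

/-- Descend from `u` inside the pieces after `j` to an element minimal there; along
the way every chain value between `chain u` and the endpoint's is attained. -/
lemma descend_gt (hgrid : IsGridPoset m chain) (hdec : IsDecomposition chain idx) (j : Fin k) :
    ∀ u : V, j < idx u →
      ∃ z : V, z ≤ u ∧ j < idx z ∧ (∀ w, j < idx w → ¬w < z) ∧
        ∀ c, chain u ≤ c → c ≤ chain z → ∃ y, y ≤ u ∧ j < idx y ∧ chain y = c := fun u =>
  WellFounded.induction (wellFounded_lt (α := V))
    (C := fun u => j < idx u →
      ∃ z : V, z ≤ u ∧ j < idx z ∧ (∀ w, j < idx w → ¬w < z) ∧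
        ∀ c, chain u ≤ c → c ≤ chain z → ∃ y, y ≤ u ∧ j < idx y ∧ chain y = c) u
    (fun x IH hx => by
      by_cases hmin : ∀ w, j < idx w → ¬w < x
      · refine ⟨x, le_rfl, hx, hmin, fun c h1 h2 => ⟨x, le_rfl, hx, le_antisymm h1 h2⟩⟩
      · push_neg at hmin
        obtain ⟨w, hwj, hwx⟩ := hmin
        obtain ⟨y, hy1, hy2⟩ := hwx.exists_le_covby
        have hyj : j < idx y := hwj.trans_le (hdec.1 w y hy1)
        obtain ⟨z, hz1, hz2, hz3, hzval⟩ := IH y hy2.lt hyj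
        refine ⟨z, hz1.trans hy2.le, hz2, hz3, ?_⟩
        intro c hc1 hc2
        rcases eq_or_lt_of_le hc1 with rfl | hc1'
        · exact ⟨x, le_rfl, hx, rfl⟩
        · have hcy : chain y ≤ c := by
            rcases hgrid.2.2.2 y x hy2 with h | h <;> omega
          obtain ⟨y', h1, h2, h3⟩ := hzval c hcy hc2
          exact ⟨y', h1.trans hy2.le, h2, h3⟩)

/-- Descend from `v` inside its piece to a piece-minimal element. -/
lemma descend_piece (hdec : IsDecomposition chain idx) (j : Fin k) :
    ∀ v : V, idx v = j → ∃ a : V, a ≤ v ∧ idx a = j ∧ ∀ w, idx w = j → ¬w < a := fun v =>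
  WellFounded.induction (wellFounded_lt (α := V))
    (C := fun v => idx v = j → ∃ a : V, a ≤ v ∧ idx a = j ∧ ∀ w, idx w = j → ¬w < a) v
    (fun x IH hx => by
      by_cases hmin : ∀ w, idx w = j → ¬w < x
      · exact ⟨x, le_rfl, hx, hmin⟩
      · push_neg at hmin
        obtain ⟨w, hwj, hwx⟩ := hmin
        obtain ⟨y, hy1, hy2⟩ := hwx.exists_le_covby
        have hyj : idx y = j :=
          le_antisymm (hx ▸ hdec.1 y x hy2.le) (hwj ▸ hdec.1 w y hy1)
        obtain ⟨a, ha1, ha2, ha3⟩ := IH y hy2.lt hyj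
        exact ⟨a, ha1.trans hy2.le, ha2, ha3⟩)

variable {chain color idx}

/-- Key Lemma A: if every element of `s` above `u` in `u`'s own piece has color `γ`,
then every element of `s` above `u` has color `γ`. -/
lemma lemmaA (hgrid : IsGridPoset m chain) (hcolor : IsTwoColoring chain color)
    (hdec : IsDecomposition chain idx) {γ : TwoColor} (s : OrderIdeal V) (u : V)
    (H : ∀ x ∈ s.1, idx x = idx u → u ≤ x → color x = γ) :
    ∀ v ∈ s.1, u ≤ v → color v = γ := by
  intro v hv huv
  by_contra hne
  have hij : idx u < idx v := by
    rcases lt_or_eq_of_le (hdec.1 u v huv) with h | h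
    · exact h
    · exact absurd (H v hv h.symm huv) hne
  obtain ⟨x, hux, hxi, hxmax, hxval⟩ := climb_piece chain idx hgrid hdec (idx u) u rfl
  obtain ⟨w, hvw, hwmax⟩ := exists_maximal_above v
  have h3 : chain x ≤ chain w :=
    hdec.2.2.1 (idx u) x w hxi (hij.trans_le (hdec.1 v w hvw)) hxmax (fun w' _ => hwmax w')
  have hcwv : chain w ≤ chain v := chain_anti chain hgrid w v hvw
  have hcvu : chain v ≤ chain u := chain_anti chain hgrid v u huv
  obtain ⟨y, huy, hyi, hyc⟩ := hxval (chain v) (h3.trans hcwv) hcvu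
  have hcolY : color y = color v := hcolor.1 y v (by rw [hyc])
  have hys : y ∉ s.1 := fun hy => hne (hcolY ▸ H y hy hyi huy)
  have hyne : y ≠ v := fun h => hys (h ▸ hv)
  have hcomp : y ≤ v ∨ v ≤ y :=
    hgrid.2.2.1 (chain v) (show y ∈ {x : V | chain x = chain v} from hyc)
      (show v ∈ {x : V | chain x = chain v} from rfl) hyne
  rcases hcomp with h | h
  · exact hys (s.2 h hv)
  · have := hdec.1 v y h
    rw [hyi] at this
    exact absurd this (not_le.2 hij)

/-- Key Lemma B: if every element outside `s` below `u` in `u`'s own piece has color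
`γ`, then every element outside `s` below `u` has color `γ`. -/
lemma lemmaB (hgrid : IsGridPoset m chain) (hcolor : IsTwoColoring chain color)
    (hdec : IsDecomposition chain idx) {γ : TwoColor} (s : OrderIdeal V) (u : V)
    (H : ∀ x, x ≤ u → idx x = idx u → x ∉ s.1 → color x = γ) :
    ∀ v, v ≤ u → v ∉ s.1 → color v = γ := by
  by_contra hbad
  push_neg at hbad
  set BAD : Set V := {v | v ≤ u ∧ v ∉ s.1 ∧ color v ≠ γ} with hBAD
  have hBne : BAD.Nonempty := by
    obtain ⟨v, h1, h2, h3⟩ := hbad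
    exact ⟨v, h1, h2, h3⟩
  obtain ⟨v, hv, hvmax⟩ := Set.Finite.exists_maximalFor idx BAD (Set.toFinite _) hBne
  obtain ⟨hvu, hvs, hvγ⟩ := hv
  have hji : idx v < idx u :=
    lt_of_le_of_ne (hdec.1 v u hvu) (fun h => hvγ (H v hvu h hvs))
  obtain ⟨a, hav, hai, hamin⟩ := descend_piece chain idx hdec (idx v) v rfl
  obtain ⟨z, hzu, hzj, hzmin, hzval⟩ := descend_gt chain idx hgrid hdec (idx v) u hji
  have h4 : chain a ≤ chain z := hdec.2.2.2 (idx v) a z hai hzj hamin hzmin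
  have hca : chain v ≤ chain a := chain_anti chain hgrid v a hav
  have hcu : chain u ≤ chain v := chain_anti chain hgrid u v hvu
  obtain ⟨y, hyu, hyj, hyc⟩ := hzval (chain v) hcu (hca.trans h4)
  have hcolY : color y = color v := hcolor.1 y v (by rw [hyc])
  have hyne : y ≠ v := fun h => by rw [h] at hyj; exact lt_irrefl _ hyj
  have hcomp : y ≤ v ∨ v ≤ y :=
    hgrid.2.2.1 (chain v) (show y ∈ {x : V | chain x = chain v} from hyc)
      (show v ∈ {x : V | chain x = chain v} from rfl) hyne
  rcases hcomp with h | h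
  · exact absurd (hdec.1 y v h) (not_le.2 hyj)
  · have hyns : y ∉ s.1 := fun hy => hvs (s.2 h hy)
    rcases lt_or_eq_of_le (hdec.1 y u hyu) with hlt | heq
    · have hyBAD : y ∈ BAD := ⟨hyu, hyns, by rw [hcolY]; exact hvγ⟩
      exact absurd (hvmax hyBAD hyj.le) (not_le.2 hyj)
    · exact hvγ (hcolY ▸ H y hyu heq hyns)

end GridLemmas
section Assembly

open Set

variable {V : Type*} [PartialOrder V] [Fintype V] {m k : ℕ}
variable {chain : V → ℕ} {color : V → TwoColor} {idx : V → Fin k}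

lemma ncard_fiber_sum (f : V → Fin k) (A : Set V) :
    ∑ i : Fin k, (A ∩ {v | f v = i}).ncard = A.ncard := by
  classical
  have hA : A.Finite := A.toFinite
  rw [Set.ncard_eq_toFinset_card _ hA,
    Finset.card_eq_sum_card_fiberwise (f := f) (t := Finset.univ) (fun x _ => Finset.mem_univ _)]
  refine Finset.sum_congr rfl (fun i _ => ?_)
  have h : A ∩ {v | f v = i} = ↑(hA.toFinset.filter (fun v => f v = i)) := by
    ext x
    simp only [Finset.coe_filter, hA.mem_toFinset, Set.mem_inter_iff, Set.mem_setOf_eq]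
  rw [h, Set.ncard_coe_finset]

lemma rho_sum (hgrid : IsGridPoset m chain) (hcolor : IsTwoColoring chain color)
    (hdec : IsDecomposition chain idx) (s : OrderIdeal V) (γ : TwoColor) :
    rhoOf (idealCov color γ) s =
      ∑ i : Fin k, rhoOf (idealCov (subColor idx color i) γ) (restrictIdeal idx s i) := by
  rw [rho_eq color γ s, ← ncard_fiber_sum idx (USet color γ s.1)]
  refine Finset.sum_congr rfl (fun i _ => ?_)
  rw [rho_eq (subColor idx color i) γ (restrictIdeal idx s i)]
  have hUi : USet (subColor idx color i) γ (restrictIdeal idx s i).1 =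
      (Subtype.val ⁻¹' (USet color γ s.1) : Set {v : V // idx v = i}) := by
    ext x
    constructor
    · rintro ⟨hx, hall⟩
      refine ⟨hx, ?_⟩
      refine lemmaA hgrid hcolor hdec s x.1 ?_
      intro w hw hwidx hxw
      exact hall (⟨w, by rw [hwidx, x.2]⟩ : {v : V // idx v = i}) hw
        (Subtype.coe_le_coe.mp (by exact hxw))
    · rintro ⟨hx, hall⟩
      exact ⟨hx, fun y hy hxy => hall y.1 hy (Subtype.coe_le_coe.mpr hxy)⟩
  rw [hUi, ← Set.ncard_image_of_injective _ (Subtype.val_injective),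
    Set.image_preimage_eq_inter_range, Subtype.range_coe_subtype]

lemma delta_sum (hgrid : IsGridPoset m chain) (hcolor : IsTwoColoring chain color)
    (hdec : IsDecomposition chain idx) (s : OrderIdeal V) (γ : TwoColor) :
    deltaOf (idealCov color γ) s =
      ∑ i : Fin k, deltaOf (idealCov (subColor idx color i) γ) (restrictIdeal idx s i) := by
  rw [delta_eq color γ s, ← ncard_fiber_sum idx (DSet color γ s.1)]
  refine Finset.sum_congr rfl (fun i _ => ?_)
  rw [delta_eq (subColor idx color i) γ (restrictIdeal idx s i)]
  have hDi : DSet (subColor idx color i) γ (restrictIdeal idx s i).1 =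
      (Subtype.val ⁻¹' (DSet color γ s.1) : Set {v : V // idx v = i}) := by
    ext x
    constructor
    · rintro ⟨hx, hall⟩
      refine ⟨hx, ?_⟩
      refine lemmaB hgrid hcolor hdec s x.1 ?_
      intro w hwle hwidx hw
      exact hall (⟨w, by rw [hwidx, x.2]⟩ : {v : V // idx v = i})
        (Subtype.coe_le_coe.mp (by exact hwle)) hw
    · rintro ⟨hx, hall⟩
      exact ⟨hx, fun y hy hys => hall y.1 (Subtype.coe_le_coe.mpr hy) hys⟩
  rw [hDi, ← Set.ncard_image_of_injective _ (Subtype.val_injective),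
    Set.image_preimage_eq_inter_range, Subtype.range_coe_subtype]

end Assembly
/-- Lemma 3.1(1): if the two-color grid poset `P` decomposes as
`P = P₁ ◁ P₂ ◁ ⋯ ◁ P_k`, then for every order ideal `s` of `P` and every color `γ`,
the statistics `ρ_γ`, `l_γ` and the weight `wt`, computed in the edge-colored lattice
`L = J_color(P)`, are the sums over `i` of the corresponding statistics of
`s ∩ P_i` computed in `L_i = J_color(P_i)`. -/
theorem grid_decomposition_statistics {V : Type*} [PartialOrder V] [Fintype V]
    {m k : ℕ} (chain : V → ℕ) (color : V → TwoColor) (idx : V → Fin k)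
    (hgrid : IsGridPoset m chain) (hcolor : IsTwoColoring chain color)
    (hdec : IsDecomposition chain idx)
    (s : OrderIdeal V) (γ : TwoColor) :
    rhoOf (idealCov color γ) s =
        (∑ i : Fin k, rhoOf (idealCov (subColor idx color i) γ) (restrictIdeal idx s i)) ∧
    lenOf (idealCov color γ) s =
        (∑ i : Fin k, lenOf (idealCov (subColor idx color i) γ) (restrictIdeal idx s i)) ∧
    wtOf (idealCov color) s =
        (∑ i : Fin k, wtOf (idealCov (subColor idx color i)) (restrictIdeal idx s i)) := by
  have hR : ∀ δ : TwoColor, rhoOf (idealCov color δ) s =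
      ∑ i : Fin k, rhoOf (idealCov (subColor idx color i) δ) (restrictIdeal idx s i) :=
    fun δ => rho_sum hgrid hcolor hdec s δ
  have hD : ∀ δ : TwoColor, deltaOf (idealCov color δ) s =
      ∑ i : Fin k, deltaOf (idealCov (subColor idx color i) δ) (restrictIdeal idx s i) :=
    fun δ => delta_sum hgrid hcolor hdec s δ
  refine ⟨hR γ, ?_, ?_⟩
  · unfold lenOf
    rw [hR γ, hD γ, ← Finset.sum_add_distrib]
  · unfold wtOf
    refine Prod.ext ?_ ?_
    · rw [Prod.fst_sum]
      simp only
      rw [Finset.sum_sub_distrib, ← Nat.cast_sum, ← Nat.cast_sum,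
        hR TwoColor.alpha, hD TwoColor.alpha]
    · rw [Prod.snd_sum]
      simp only
      rw [Finset.sum_sub_distrib, ← Nat.cast_sum, ← Nat.cast_sum,
        hR TwoColor.beta, hD TwoColor.beta]
end

section
/- For all integers a, b ≥ 0, the edge-colored distributive lattice L_A2(a,b) of A2-semistandard tableaux of shape (a,b) satisfies the structure condition for the A2 Cartan matrix with rows M_α = (2,−1), M_β = (−1,2): for every covering edge S ⋖ T of color γ, wt(T) = wt(S) + M_γ. -/
/-- A filling of the shape with `b` columns of length two (each recorded as
(top entry, bottom entry)) followed by `a` columns of length one. -/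
abbrev TabT (a b : ℕ) : Type := (Fin b → ℕ × ℕ) × (Fin a → ℕ)

/-- `n_k(T)`: the number of entries of the tableau `T` equal to `k`. -/
def nkOf {m n : ℕ} (T : (Fin m → ℕ × ℕ) × (Fin n → ℕ)) (k : ℕ) : ℕ :=
  (Finset.univ.filter fun j : Fin m => (T.1 j).1 = k).card +
    (Finset.univ.filter fun j : Fin m => (T.1 j).2 = k).card +
    (Finset.univ.filter fun i : Fin n => T.2 i = k).card

/-- The set of `A2`-semistandard tableaux of shape `(a,b)`: entries from `{1,2,3}`,
rows weakly increasing, columns strictly increasing. -/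
def SA2 (a b : ℕ) : Set (TabT a b) :=
  {T | (∀ j : Fin b, 1 ≤ (T.1 j).1 ∧ (T.1 j).1 ≤ 3 ∧ 1 ≤ (T.1 j).2 ∧ (T.1 j).2 ≤ 3 ∧
          (T.1 j).1 < (T.1 j).2) ∧
       (∀ i : Fin a, 1 ≤ T.2 i ∧ T.2 i ≤ 3) ∧
       (∀ j j' : Fin b, j ≤ j' → (T.1 j).1 ≤ (T.1 j').1 ∧ (T.1 j).2 ≤ (T.1 j').2) ∧
       (∀ i i' : Fin a, i ≤ i' → T.2 i ≤ T.2 i') ∧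
       (∀ (j : Fin b) (i : Fin a), (T.1 j).1 ≤ T.2 i)}

/-- The set of `C2`-semistandard tableaux of shape `(a,b)`: entries from `{1,2,3,4}`,
rows weakly increasing, columns strictly increasing, no column equal to `(1,4)`,
and at most one column equal to `(2,3)`. -/
def SC2 (a b : ℕ) : Set (TabT a b) :=
  {T | (∀ j : Fin b, 1 ≤ (T.1 j).1 ∧ (T.1 j).1 ≤ 4 ∧ 1 ≤ (T.1 j).2 ∧ (T.1 j).2 ≤ 4 ∧
          (T.1 j).1 < (T.1 j).2) ∧
       (∀ i : Fin a, 1 ≤ T.2 i ∧ T.2 i ≤ 4) ∧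
       (∀ j j' : Fin b, j ≤ j' → (T.1 j).1 ≤ (T.1 j').1 ∧ (T.1 j).2 ≤ (T.1 j').2) ∧
       (∀ i i' : Fin a, i ≤ i' → T.2 i ≤ T.2 i') ∧
       (∀ (j : Fin b) (i : Fin a), (T.1 j).1 ≤ T.2 i) ∧
       (∀ j : Fin b, T.1 j ≠ (1, 4)) ∧
       (∀ j j' : Fin b, T.1 j = (2, 3) → T.1 j' = (2, 3) → j = j')}

/-- The restrictions of Figure 4.5 on a pair of adjacent length-two columns of a
`G2`-semistandard tableau. -/
def g2pair2 (c c' : ℕ × ℕ) : Prop :=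
  (c = (1, 4) → c' ≠ (1, 4) ∧ c' ≠ (1, 5) ∧ c' ≠ (1, 6) ∧ c' ≠ (1, 7)) ∧
  (c = (1, 5) → c' ≠ (1, 5) ∧ c' ≠ (1, 6) ∧ c' ≠ (1, 7)) ∧
  (c = (1, 6) → c' ≠ (1, 6) ∧ c' ≠ (1, 7) ∧ c' ≠ (2, 6) ∧ c' ≠ (2, 7)) ∧
  (c = (2, 6) → c' ≠ (2, 6) ∧ c' ≠ (2, 7)) ∧
  (c = (1, 7) → c' ≠ (1, 7) ∧ c' ≠ (2, 7) ∧ c' ≠ (3, 7) ∧ c' ≠ (4, 7)) ∧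
  (c = (2, 7) → c' ≠ (2, 7) ∧ c' ≠ (3, 7) ∧ c' ≠ (4, 7)) ∧
  (c = (3, 7) → c' ≠ (3, 7) ∧ c' ≠ (4, 7)) ∧
  (c = (4, 7) → c' ≠ (4, 7))

/-- The restrictions of Figure 4.5 on a length-two column followed by a
length-one column in a `G2`-semistandard tableau. -/
def g2pair1 (c : ℕ × ℕ) (e : ℕ) : Prop :=
  (c = (1, 4) → e ≠ 1) ∧
  (c = (1, 5) → e ≠ 1) ∧
  (c = (1, 6) → e ≠ 1 ∧ e ≠ 2) ∧
  (c = (2, 6) → e ≠ 2) ∧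
  (c = (1, 7) → e ≠ 1 ∧ e ≠ 2 ∧ e ≠ 3 ∧ e ≠ 4) ∧
  (c = (2, 7) → e ≠ 2 ∧ e ≠ 3 ∧ e ≠ 4) ∧
  (c = (3, 7) → e ≠ 3 ∧ e ≠ 4) ∧
  (c = (4, 7) → e ≠ 4)

/-- The set of `G2`-semistandard tableaux of shape `(a,b)`. -/
def SG2 (a b : ℕ) : Set (TabT a b) :=
  {T | (∀ j : Fin b, 1 ≤ (T.1 j).1 ∧ (T.1 j).1 ≤ 7 ∧ 1 ≤ (T.1 j).2 ∧ (T.1 j).2 ≤ 7 ∧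
          (T.1 j).1 < (T.1 j).2) ∧
       (∀ i : Fin a, 1 ≤ T.2 i ∧ T.2 i ≤ 7) ∧
       (∀ j j' : Fin b, j ≤ j' → (T.1 j).1 ≤ (T.1 j').1 ∧ (T.1 j).2 ≤ (T.1 j').2) ∧
       (∀ i i' : Fin a, i ≤ i' → T.2 i ≤ T.2 i') ∧
       (∀ (j : Fin b) (i : Fin a), (T.1 j).1 ≤ T.2 i) ∧
       (∀ i i' : Fin a, T.2 i = 4 → T.2 i' = 4 → i = i') ∧
       (∀ j : Fin b, T.1 j ≠ (2, 3) ∧ T.1 j ≠ (2, 4) ∧ T.1 j ≠ (3, 4) ∧ T.1 j ≠ (3, 5) ∧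
          T.1 j ≠ (4, 5) ∧ T.1 j ≠ (4, 6) ∧ T.1 j ≠ (5, 6)) ∧
       (∀ j j' : Fin b, (j' : ℕ) = (j : ℕ) + 1 → g2pair2 (T.1 j) (T.1 j')) ∧
       (∀ (j : Fin b) (i : Fin a), (j : ℕ) + 1 = b → (i : ℕ) = 0 → g2pair1 (T.1 j) (T.2 i))}
/-- The edge colors determined by tableau entries: for `A2`, the entry `1` gives
color `α` and the entry `2` gives color `β`. -/
def colEntA2 : ℕ → TwoColor := fun n => if n = 2 then TwoColor.beta else TwoColor.alpha

/-- For `C2`, entries `1` and `3` give color `α` and entry `2` gives color `β`. -/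
def colEntC2 : ℕ → TwoColor := fun n => if n = 2 then TwoColor.beta else TwoColor.alpha

/-- For `G2`, entries `1, 3, 4, 6` give color `α` and entries `2, 5` give color `β`. -/
def colEntG2 : ℕ → TwoColor :=
  fun n => if n = 2 ∨ n = 5 then TwoColor.beta else TwoColor.alpha

/-- The colored covering relation of a lattice of semistandard tableaux:
`T` covers `S` exactly when `S` is obtained from `T` by increasing a single
entry by `1`, and the edge is colored according to the entry of `T`
at the changed position (via `colEnt`). -/
def tabCov {a b : ℕ} (colEnt : ℕ → TwoColor) (SSet : Set (TabT a b)) (γ : TwoColor)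
    (S T : {T : TabT a b // T ∈ SSet}) : Prop :=
  (∃ j : Fin b, colEnt ((T.1.1 j).1) = γ ∧
      S.1.1 j = ((T.1.1 j).1 + 1, (T.1.1 j).2) ∧
      (∀ j' : Fin b, j' ≠ j → S.1.1 j' = T.1.1 j') ∧ S.1.2 = T.1.2) ∨
  (∃ j : Fin b, colEnt ((T.1.1 j).2) = γ ∧
      S.1.1 j = ((T.1.1 j).1, (T.1.1 j).2 + 1) ∧
      (∀ j' : Fin b, j' ≠ j → S.1.1 j' = T.1.1 j') ∧ S.1.2 = T.1.2) ∨
  (∃ i : Fin a, colEnt (T.1.2 i) = γ ∧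
      S.1.2 i = T.1.2 i + 1 ∧
      (∀ i' : Fin a, i' ≠ i → S.1.2 i' = T.1.2 i') ∧ S.1.1 = T.1.1)

/-- The colored covering relation of the lattice `L_A2(a,b)`. -/
def covA2 (a b : ℕ) (γ : TwoColor) (S T : {T : TabT a b // T ∈ SA2 a b}) : Prop :=
  tabCov colEntA2 (SA2 a b) γ S T

/-- The colored covering relation of the lattice `L_C2(a,b)`. -/
def covC2 (a b : ℕ) (γ : TwoColor) (S T : {T : TabT a b // T ∈ SC2 a b}) : Prop :=
  tabCov colEntC2 (SC2 a b) γ S T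

/-- The colored covering relation of the lattice `L_G2(a,b)`. -/
def covG2 (a b : ℕ) (γ : TwoColor) (S T : {T : TabT a b // T ∈ SG2 a b}) : Prop :=
  tabCov colEntG2 (SG2 a b) γ S T

/-- The `A2` Cartan matrix, given by its rows `M_α = (2,−1)`, `M_β = (−1,2)`. -/
def MA2 : TwoColor → ℤ × ℤ
  | TwoColor.alpha => (2, -1)
  | TwoColor.beta => (-1, 2)

/-- The `C2` Cartan matrix, given by its rows `M_α = (2,−1)`, `M_β = (−2,2)`. -/
def MC2 : TwoColor → ℤ × ℤ
  | TwoColor.alpha => (2, -1)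
  | TwoColor.beta => (-2, 2)

/-- The `G2` Cartan matrix, given by its rows `M_α = (2,−1)`, `M_β = (−3,2)`. -/
def MG2 : TwoColor → ℤ × ℤ
  | TwoColor.alpha => (2, -1)
  | TwoColor.beta => (-3, 2)


section A2Proof

open Finset

variable {a b : ℕ}

/-! ### Generic chain-length lemmas -/

lemma chainsStartingAt_eq_flip {V : Type*} (r : V → V → Prop) (t : V) :
    chainsStartingAt r t = chainsEndingAt (fun x y => r y x) t := by
  ext n
  constructor
  · rintro ⟨c, hc0, hc⟩
    refine ⟨fun i => c (n - i), by simp [hc0], fun i hi => ?_⟩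
    have h1 : n - (i+1) + 1 = n - i := by omega
    have := hc (n - (i+1)) (by omega)
    rwa [h1] at this
  · rintro ⟨c, hcn, hc⟩
    refine ⟨fun i => c (n - i), by simp [hcn], fun i hi => ?_⟩
    have h1 : n - (i+1) + 1 = n - i := by omega
    have := hc (n - (i+1)) (by omega)
    rwa [h1] at this

lemma sSup_chainsEndingAt {V : Type*} (r : V → V → Prop) (F : V → ℕ)
    (hF : ∀ s t, r s t → F t = F s + 1)
    (hE : ∀ t, 0 < F t → ∃ s, r s t) (t : V) :
    sSup (chainsEndingAt r t) = F t := by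
  have hmem : ∀ (n : ℕ) (t : V), F t = n → n ∈ chainsEndingAt r t := by
    intro n
    induction n with
    | zero => intro t _; exact ⟨fun _ => t, rfl, fun i hi => absurd hi (by omega)⟩
    | succ k ih =>
      intro t hFt
      obtain ⟨s, hs⟩ := hE t (by omega)
      have hFs : F s = k := by have := hF s t hs; omega
      obtain ⟨c, hck, hc⟩ := ih s hFs
      refine ⟨fun i => if i < k + 1 then c i else t, by simp, fun i hi => ?_⟩
      rcases Nat.lt_or_ge i k with h | h
      · simp only [if_pos (by omega : i < k+1), if_pos (by omega : i+1 < k+1)]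
        exact hc i h
      · have hik : i = k := by omega
        subst hik
        simpa [hck] using hs
  have hub : ∀ n ∈ chainsEndingAt r t, n ≤ F t := by
    rintro n ⟨c, hcn, hc⟩
    have key : ∀ i ≤ n, i ≤ F (c i) := by
      intro i
      induction i with
      | zero => intro _; omega
      | succ k ih =>
        intro hk
        have := hF (c k) (c (k+1)) (hc k (by omega))
        have := ih (by omega)
        omega
    have := key n le_rfl
    rwa [hcn] at this
  exact le_antisymm (csSup_le ⟨F t, hmem _ _ rfl⟩ hub) (le_csSup ⟨F t, hub⟩ (hmem _ _ rfl))

lemma sSup_chainsStartingAt {V : Type*} (r : V → V → Prop) (G : V → ℕ)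
    (hG : ∀ s t, r s t → G s = G t + 1)
    (hE : ∀ t, 0 < G t → ∃ u, r t u) (t : V) :
    sSup (chainsStartingAt r t) = G t := by
  rw [chainsStartingAt_eq_flip]
  exact sSup_chainsEndingAt (fun x y => r y x) G (fun s t h => hG t s h) hE t

/-! ### Counting helpers -/

lemma count_update {n : ℕ} {κ : Type*} (f f' : Fin n → κ) (j : Fin n)
    (h : ∀ x, x ≠ j → f' x = f x) (p : κ → Prop) [DecidablePred p] :
    (Finset.univ.filter fun x => p (f' x)).card + (if p (f j) then 1 else 0) =
    (Finset.univ.filter fun x => p (f x)).card + (if p (f' j) then 1 else 0) := by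
  have key : ∀ g : Fin n → κ, (Finset.univ.filter fun x => p (g x)).card
      = (∑ x ∈ Finset.univ.erase j, (if p (g x) then 1 else 0)) + (if p (g j) then 1 else 0) := by
    intro g
    rw [Finset.card_filter, ← Finset.sum_erase_add _ _ (Finset.mem_univ j)]
  rw [key f, key f']
  have heq : (∑ x ∈ Finset.univ.erase j, (if p (f' x) then 1 else 0))
      = ∑ x ∈ Finset.univ.erase j, (if p (f x) then 1 else 0) :=
    Finset.sum_congr rfl (fun x hx => by rw [h x (Finset.ne_of_mem_erase hx)])
  rw [heq]; ring

/-- `ρ_α`-statistic: number of `1`s that can be increased to `2` below `T`. -/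
def cA (T : TabT a b) : ℕ :=
  (Finset.univ.filter fun j : Fin b => T.1 j = (1,3)).card +
  (Finset.univ.filter fun i : Fin a => T.2 i = 1).card

/-- `δ_α`-statistic: number of `2`s in the first row of `T`. -/
def cB (T : TabT a b) : ℕ :=
  (Finset.univ.filter fun j : Fin b => (T.1 j).1 = 2).card +
  (Finset.univ.filter fun i : Fin a => T.2 i = 2).card

/-- `ρ_β`-statistic. -/
def cC (T : TabT a b) : ℕ :=
  (Finset.univ.filter fun j : Fin b => (T.1 j).2 = 2).card +
  (Finset.univ.filter fun i : Fin a => T.2 i = 2).card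

/-- `δ_β`-statistic. -/
def cD (T : TabT a b) : ℕ :=
  (Finset.univ.filter fun j : Fin b => T.1 j = (1,3)).card +
  (Finset.univ.filter fun i : Fin a => T.2 i = 3).card

/-! ### Case analysis of covering edges -/

lemma alpha_cases (S T : {T : TabT a b // T ∈ SA2 a b}) (h : covA2 a b TwoColor.alpha S T) :
    (∃ j : Fin b, T.1.1 j = (1,3) ∧ S.1.1 j = (2,3) ∧
      (∀ j', j' ≠ j → S.1.1 j' = T.1.1 j') ∧ S.1.2 = T.1.2) ∨
    (∃ i : Fin a, T.1.2 i = 1 ∧ S.1.2 i = 2 ∧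
      (∀ i', i' ≠ i → S.1.2 i' = T.1.2 i') ∧ S.1.1 = T.1.1) := by
  obtain ⟨hT1, hT2, hT3, hT4, hT5⟩ := T.2
  obtain ⟨hS1, hS2, hS3, hS4, hS5⟩ := S.2
  rcases h with ⟨j, hcol, hSj, hag, h2⟩ | ⟨j, hcol, hSj, hag, h2⟩ | ⟨i, hcol, hSi, hag, h1⟩
  · left
    obtain ⟨ht1, ht2, ht3, ht4, ht5⟩ := hT1 j
    have htop : (T.1.1 j).1 ≠ 2 := by
      intro hh
      rw [colEntA2, if_pos hh] at hcol
      exact absurd hcol (by decide)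
    have htop1 : (T.1.1 j).1 = 1 := by omega
    obtain ⟨hs1, hs2, hs3, hs4, hs5⟩ := hS1 j
    rw [hSj] at hs5 hs4
    simp only at hs5 hs4
    have hbot : (T.1.1 j).2 = 3 := by omega
    refine ⟨j, ?_, ?_, hag, h2⟩
    · rw [← htop1, ← hbot]
    · rw [hSj, htop1, hbot]
  · exfalso
    obtain ⟨ht1, ht2, ht3, ht4, ht5⟩ := hT1 j
    have hbot : (T.1.1 j).2 ≠ 2 := by
      intro hh
      rw [colEntA2, if_pos hh] at hcol
      exact absurd hcol (by decide)
    have hbot3 : (T.1.1 j).2 = 3 := by omega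
    obtain ⟨hs1, hs2, hs3, hs4, hs5⟩ := hS1 j
    rw [hSj] at hs4
    simp only at hs4
    omega
  · right
    obtain ⟨ht1, ht2⟩ := hT2 i
    have hne : T.1.2 i ≠ 2 := by
      intro hh
      rw [colEntA2, if_pos hh] at hcol
      exact absurd hcol (by decide)
    obtain ⟨hs1, hs2⟩ := hS2 i
    rw [hSi] at hs2
    have h1' : T.1.2 i = 1 := by omega
    exact ⟨i, h1', by rw [hSi, h1'], hag, h1⟩

lemma beta_cases (S T : {T : TabT a b // T ∈ SA2 a b}) (h : covA2 a b TwoColor.beta S T) :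
    (∃ j : Fin b, T.1.1 j = (1,2) ∧ S.1.1 j = (1,3) ∧
      (∀ j', j' ≠ j → S.1.1 j' = T.1.1 j') ∧ S.1.2 = T.1.2) ∨
    (∃ i : Fin a, T.1.2 i = 2 ∧ S.1.2 i = 3 ∧
      (∀ i', i' ≠ i → S.1.2 i' = T.1.2 i') ∧ S.1.1 = T.1.1) := by
  obtain ⟨hT1, hT2, hT3, hT4, hT5⟩ := T.2
  obtain ⟨hS1, hS2, hS3, hS4, hS5⟩ := S.2
  rcases h with ⟨j, hcol, hSj, hag, h2⟩ | ⟨j, hcol, hSj, hag, h2⟩ | ⟨i, hcol, hSi, hag, h1⟩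
  · exfalso
    obtain ⟨ht1, ht2, ht3, ht4, ht5⟩ := hT1 j
    have htop : (T.1.1 j).1 = 2 := by
      by_contra hh
      rw [colEntA2, if_neg hh] at hcol
      exact absurd hcol (by decide)
    obtain ⟨hs1, hs2, hs3, hs4, hs5⟩ := hS1 j
    rw [hSj] at hs5 hs4
    simp only at hs5 hs4
    omega
  · left
    obtain ⟨ht1, ht2, ht3, ht4, ht5⟩ := hT1 j
    have hbot : (T.1.1 j).2 = 2 := by
      by_contra hh
      rw [colEntA2, if_neg hh] at hcol
      exact absurd hcol (by decide)
    have htop1 : (T.1.1 j).1 = 1 := by omega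
    refine ⟨j, ?_, ?_, hag, h2⟩
    · rw [← htop1, ← hbot]
    · rw [hSj, htop1, hbot]
  · right
    have hne : T.1.2 i = 2 := by
      by_contra hh
      rw [colEntA2, if_neg hh] at hcol
      exact absurd hcol (by decide)
    exact ⟨i, hne, by rw [hSi, hne], hag, h1⟩

/-! ### Edge count lemmas -/

lemma alpha_edge (S T : {T : TabT a b // T ∈ SA2 a b}) (h : covA2 a b TwoColor.alpha S T) :
    cA T.1 = cA S.1 + 1 ∧ cB S.1 = cB T.1 + 1 ∧ cC S.1 + cD T.1 = cC T.1 + cD S.1 + 1 := by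
  rcases alpha_cases S T h with ⟨j, hTj, hSj, hag, h2⟩ | ⟨i, hTi, hSi, hag, h1⟩
  · have e1 := count_update T.1.1 S.1.1 j hag (fun c => c = (1,3))
    have e2 := count_update T.1.1 S.1.1 j hag (fun c => c.1 = 2)
    have e3 := count_update T.1.1 S.1.1 j hag (fun c => c.2 = 2)
    simp only [hTj, hSj, if_pos, if_neg, Prod.mk.injEq] at e1 e2 e3
    norm_num at e1 e2 e3
    simp only [cA, cB, cC, cD, h2]
    omega
  · have e1 := count_update T.1.2 S.1.2 i hag (fun c => c = 1)
    have e2 := count_update T.1.2 S.1.2 i hag (fun c => c = 2)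
    have e3 := count_update T.1.2 S.1.2 i hag (fun c => c = 3)
    simp only [hTi, hSi] at e1 e2 e3
    norm_num at e1 e2 e3
    simp only [cA, cB, cC, cD, h1]
    omega

lemma beta_edge (S T : {T : TabT a b // T ∈ SA2 a b}) (h : covA2 a b TwoColor.beta S T) :
    cC T.1 = cC S.1 + 1 ∧ cD S.1 = cD T.1 + 1 ∧ cA S.1 + cB T.1 = cA T.1 + cB S.1 + 1 := by
  rcases beta_cases S T h with ⟨j, hTj, hSj, hag, h2⟩ | ⟨i, hTi, hSi, hag, h1⟩
  · have e1 := count_update T.1.1 S.1.1 j hag (fun c => c = (1,3))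
    have e2 := count_update T.1.1 S.1.1 j hag (fun c => c.1 = 2)
    have e3 := count_update T.1.1 S.1.1 j hag (fun c => c.2 = 2)
    simp only [hTj, hSj, Prod.mk.injEq] at e1 e2 e3
    norm_num at e1 e2 e3
    simp only [cA, cB, cC, cD, h2]
    omega
  · have e1 := count_update T.1.2 S.1.2 i hag (fun c => c = 1)
    have e2 := count_update T.1.2 S.1.2 i hag (fun c => c = 2)
    have e3 := count_update T.1.2 S.1.2 i hag (fun c => c = 3)
    simp only [hTi, hSi] at e1 e2 e3
    norm_num at e1 e2 e3
    simp only [cA, cB, cC, cD, h1]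
    omega


lemma exA (T : {T : TabT a b // T ∈ SA2 a b}) (h : 0 < cA T.1) :
    ∃ S, covA2 a b TwoColor.alpha S T := by
  obtain ⟨hT1, hT2, hT3, hT4, hT5⟩ := T.2
  by_cases hc : ∃ i : Fin a, T.1.2 i = 1
  · obtain ⟨i0, hi0⟩ := hc
    have hne : (Finset.univ.filter fun i : Fin a => T.1.2 i = 1).Nonempty :=
      ⟨i0, by simp [hi0]⟩
    set i := (Finset.univ.filter fun i : Fin a => T.1.2 i = 1).max' hne with hidef
    have hTi : T.1.2 i = 1 := by
      have := Finset.max'_mem _ hne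
      rw [Finset.mem_filter] at this
      exact this.2
    have hmax : ∀ i' : Fin a, T.1.2 i' = 1 → i' ≤ i :=
      fun i' h' => Finset.le_max' _ i' (by simp [h'])
    refine ⟨⟨(T.1.1, Function.update T.1.2 i 2), ⟨hT1, ?_, hT3, ?_, ?_⟩⟩, ?_⟩
    · intro i'
      try dsimp only
      rcases eq_or_ne i' i with rfl | hne'
      · simp
      · rw [Function.update_of_ne hne']; exact hT2 i'
    · intro i1 i2 hle
      try dsimp only
      by_cases h1 : i1 = i <;> by_cases h2 : i2 = i
      · subst h1; subst h2; rfl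
      · subst h1
        rw [Function.update_self, Function.update_of_ne h2]
        have hi2 : T.1.2 i2 ≠ 1 := fun hh => h2 (le_antisymm (hmax i2 hh) hle)
        have := hT2 i2
        omega
      · subst h2
        rw [Function.update_of_ne h1, Function.update_self]
        have := hT4 i1 i hle
        omega
      · rw [Function.update_of_ne h1, Function.update_of_ne h2]
        exact hT4 i1 i2 hle
    · intro j i'
      try dsimp only
      rcases eq_or_ne i' i with rfl | hne'
      · try dsimp only
        rw [Function.update_self]
        have := hT1 j
        omega
      · rw [Function.update_of_ne hne']; exact hT5 j i'
    · refine Or.inr (Or.inr ⟨i, ?_, ?_, ?_, rfl⟩)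
      · rw [hTi]; rfl
      · simp [hTi]
      · intro i' hi'; exact Function.update_of_ne hi' _ _
  · have hall : ∀ i : Fin a, 2 ≤ T.1.2 i := by
      intro i
      have h1 := hT2 i
      have h2 : T.1.2 i ≠ 1 := fun hh => hc ⟨i, hh⟩
      omega
    have hcard0 : (Finset.univ.filter fun i : Fin a => T.1.2 i = 1).card = 0 := by
      rw [Finset.card_eq_zero, Finset.filter_eq_empty_iff]
      intro i _
      have := hall i
      omega
    have hpos : 0 < (Finset.univ.filter fun j : Fin b => T.1.1 j = (1,3)).card := by
      rw [cA] at h; omega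
    obtain ⟨j0, hj0⟩ := Finset.card_pos.mp hpos
    rw [Finset.mem_filter] at hj0
    have hne : (Finset.univ.filter fun j : Fin b => T.1.1 j = (1,3)).Nonempty :=
      ⟨j0, by simp [hj0.2]⟩
    set j := (Finset.univ.filter fun j : Fin b => T.1.1 j = (1,3)).max' hne with hjdef
    have hTj : T.1.1 j = (1,3) := by
      have := Finset.max'_mem _ hne
      rw [Finset.mem_filter] at this
      exact this.2
    have hmax : ∀ j' : Fin b, T.1.1 j' = (1,3) → j' ≤ j :=
      fun j' h' => Finset.le_max' _ j' (by simp [h'])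
    refine ⟨⟨(Function.update T.1.1 j (2,3), T.1.2), ⟨?_, hT2, ?_, hT4, ?_⟩⟩, ?_⟩
    · intro j'
      try dsimp only
      rcases eq_or_ne j' j with rfl | hne'
      · simp
      · rw [Function.update_of_ne hne']; exact hT1 j'
    · intro j1 j2 hle
      try dsimp only
      by_cases h1 : j1 = j <;> by_cases h2 : j2 = j
      · subst h1; subst h2; exact ⟨le_refl _, le_refl _⟩
      · subst h1
        rw [Function.update_self, Function.update_of_ne h2]
        have hb := hT1 j2
        have hm := hT3 j j2 hle
        rw [hTj] at hm
        simp only at hm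
        have hne13 : T.1.1 j2 ≠ (1,3) := fun hh => h2 (le_antisymm (hmax j2 hh) hle)
        have ht : ¬((T.1.1 j2).1 = 1 ∧ (T.1.1 j2).2 = 3) := by
          rintro ⟨u, v⟩
          apply hne13
          have heta : T.1.1 j2 = ((T.1.1 j2).1, (T.1.1 j2).2) := rfl
          rw [heta, u, v]
        constructor
        · show 2 ≤ (T.1.1 j2).1
          by_contra hcon
          push_neg at hcon
          exact ht ⟨by omega, by omega⟩
        · show 3 ≤ (T.1.1 j2).2
          omega
      · subst h2
        rw [Function.update_of_ne h1, Function.update_self]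
        have hm := hT3 j1 j hle
        rw [hTj] at hm
        simp only at hm
        have hb := hT1 j1
        exact ⟨by omega, by omega⟩
      · rw [Function.update_of_ne h1, Function.update_of_ne h2]
        exact hT3 j1 j2 hle
    · intro j' i'
      try dsimp only
      rcases eq_or_ne j' j with rfl | hne'
      · try dsimp only
        rw [Function.update_self]
        exact hall i'
      · rw [Function.update_of_ne hne']; exact hT5 j' i'
    · refine Or.inl ⟨j, ?_, ?_, ?_, rfl⟩
      · rw [hTj]; rfl
      · simp [hTj]
      · intro j' hj'; exact Function.update_of_ne hj' _ _


lemma exB (T : {T : TabT a b // T ∈ SA2 a b}) (h : 0 < cB T.1) :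
    ∃ U, covA2 a b TwoColor.alpha T U := by
  obtain ⟨hT1, hT2, hT3, hT4, hT5⟩ := T.2
  by_cases hc : ∃ j : Fin b, (T.1.1 j).1 = 2
  · obtain ⟨j0, hj0⟩ := hc
    have hne : (Finset.univ.filter fun j : Fin b => (T.1.1 j).1 = 2).Nonempty :=
      ⟨j0, by simp [hj0]⟩
    set j := (Finset.univ.filter fun j : Fin b => (T.1.1 j).1 = 2).min' hne with hjdef
    have hTj1 : (T.1.1 j).1 = 2 := by
      have := Finset.min'_mem _ hne
      rw [Finset.mem_filter] at this
      exact this.2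
    have hmin : ∀ j' : Fin b, (T.1.1 j').1 = 2 → j ≤ j' :=
      fun j' h' => Finset.min'_le _ j' (by simp [h'])
    have hTj : T.1.1 j = (2,3) := by
      have hb := hT1 j
      have heta : T.1.1 j = ((T.1.1 j).1, (T.1.1 j).2) := rfl
      rw [heta, hTj1]
      have : (T.1.1 j).2 = 3 := by omega
      rw [this]
    refine ⟨⟨(Function.update T.1.1 j (1,3), T.1.2), ⟨?_, hT2, ?_, hT4, ?_⟩⟩, ?_⟩
    · intro j'
      try dsimp only
      rcases eq_or_ne j' j with rfl | hne'
      · simp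
      · rw [Function.update_of_ne hne']; exact hT1 j'
    · intro j1 j2 hle
      try dsimp only
      by_cases h1 : j1 = j <;> by_cases h2 : j2 = j
      · subst h1; subst h2; exact ⟨le_refl _, le_refl _⟩
      · subst h1
        rw [Function.update_self, Function.update_of_ne h2]
        have hb := hT1 j2
        have hm := hT3 j j2 hle
        rw [hTj] at hm
        simp only at hm
        exact ⟨by omega, by omega⟩
      · subst h2
        rw [Function.update_of_ne h1, Function.update_self]
        have hb := hT1 j1
        have hm := hT3 j1 j hle
        rw [hTj] at hm
        simp only at hm
        have hne2 : (T.1.1 j1).1 ≠ 2 := fun hh => h1 (le_antisymm hle (hmin j1 hh))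
        exact ⟨by omega, by omega⟩
      · rw [Function.update_of_ne h1, Function.update_of_ne h2]
        exact hT3 j1 j2 hle
    · intro j' i'
      try dsimp only
      rcases eq_or_ne j' j with rfl | hne'
      · try dsimp only
        rw [Function.update_self]
        exact (hT2 i').1
      · rw [Function.update_of_ne hne']; exact hT5 j' i'
    · refine Or.inl ⟨j, ?_, ?_, ?_, rfl⟩
      · try dsimp only
        rw [Function.update_self]
        rfl
      · try dsimp only
        rw [Function.update_self, hTj]
      · intro j' hj'
        exact (Function.update_of_ne hj' _ _).symm
  · have hall : ∀ j : Fin b, (T.1.1 j).1 = 1 := by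
      intro j
      have hb := hT1 j
      have h2 : (T.1.1 j).1 ≠ 2 := fun hh => hc ⟨j, hh⟩
      omega
    have hcard0 : (Finset.univ.filter fun j : Fin b => (T.1.1 j).1 = 2).card = 0 := by
      rw [Finset.card_eq_zero, Finset.filter_eq_empty_iff]
      intro j _
      have := hall j
      omega
    have hpos : 0 < (Finset.univ.filter fun i : Fin a => T.1.2 i = 2).card := by
      rw [cB] at h; omega
    obtain ⟨i0, hi0⟩ := Finset.card_pos.mp hpos
    rw [Finset.mem_filter] at hi0
    have hne : (Finset.univ.filter fun i : Fin a => T.1.2 i = 2).Nonempty :=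
      ⟨i0, by simp [hi0.2]⟩
    set i := (Finset.univ.filter fun i : Fin a => T.1.2 i = 2).min' hne with hidef
    have hTi : T.1.2 i = 2 := by
      have := Finset.min'_mem _ hne
      rw [Finset.mem_filter] at this
      exact this.2
    have hmin : ∀ i' : Fin a, T.1.2 i' = 2 → i ≤ i' :=
      fun i' h' => Finset.min'_le _ i' (by simp [h'])
    refine ⟨⟨(T.1.1, Function.update T.1.2 i 1), ⟨hT1, ?_, hT3, ?_, ?_⟩⟩, ?_⟩
    · intro i'
      try dsimp only
      rcases eq_or_ne i' i with rfl | hne'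
      · simp
      · rw [Function.update_of_ne hne']; exact hT2 i'
    · intro i1 i2 hle
      try dsimp only
      by_cases h1 : i1 = i <;> by_cases h2 : i2 = i
      · subst h1; subst h2; exact le_refl _
      · subst h1
        rw [Function.update_self, Function.update_of_ne h2]
        have := hT2 i2
        omega
      · subst h2
        rw [Function.update_of_ne h1, Function.update_self]
        have hb := hT2 i1
        have hm := hT4 i1 i hle
        have hne2 : T.1.2 i1 ≠ 2 := fun hh => h1 (le_antisymm hle (hmin i1 hh))
        omega
      · rw [Function.update_of_ne h1, Function.update_of_ne h2]
        exact hT4 i1 i2 hle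
    · intro j i'
      try dsimp only
      rcases eq_or_ne i' i with rfl | hne'
      · try dsimp only
        rw [Function.update_self]
        have := hall j
        omega
      · rw [Function.update_of_ne hne']; exact hT5 j i'
    · refine Or.inr (Or.inr ⟨i, ?_, ?_, ?_, rfl⟩)
      · try dsimp only
        rw [Function.update_self]
        rfl
      · try dsimp only
        rw [Function.update_self, hTi]
      · intro i' hi'
        exact (Function.update_of_ne hi' _ _).symm

lemma exC (T : {T : TabT a b // T ∈ SA2 a b}) (h : 0 < cC T.1) :
    ∃ S, covA2 a b TwoColor.beta S T := by
  obtain ⟨hT1, hT2, hT3, hT4, hT5⟩ := T.2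
  by_cases hc : ∃ i : Fin a, T.1.2 i = 2
  · obtain ⟨i0, hi0⟩ := hc
    have hne : (Finset.univ.filter fun i : Fin a => T.1.2 i = 2).Nonempty :=
      ⟨i0, by simp [hi0]⟩
    set i := (Finset.univ.filter fun i : Fin a => T.1.2 i = 2).max' hne with hidef
    have hTi : T.1.2 i = 2 := by
      have := Finset.max'_mem _ hne
      rw [Finset.mem_filter] at this
      exact this.2
    have hmax : ∀ i' : Fin a, T.1.2 i' = 2 → i' ≤ i :=
      fun i' h' => Finset.le_max' _ i' (by simp [h'])
    refine ⟨⟨(T.1.1, Function.update T.1.2 i 3), ⟨hT1, ?_, hT3, ?_, ?_⟩⟩, ?_⟩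
    · intro i'
      try dsimp only
      rcases eq_or_ne i' i with rfl | hne'
      · simp
      · rw [Function.update_of_ne hne']; exact hT2 i'
    · intro i1 i2 hle
      try dsimp only
      by_cases h1 : i1 = i <;> by_cases h2 : i2 = i
      · subst h1; subst h2; exact le_refl _
      · subst h1
        rw [Function.update_self, Function.update_of_ne h2]
        have hb := hT2 i2
        have hm := hT4 i i2 hle
        rw [hTi] at hm
        have hne2 : T.1.2 i2 ≠ 2 := fun hh => h2 (le_antisymm (hmax i2 hh) hle)
        omega
      · subst h2
        rw [Function.update_of_ne h1, Function.update_self]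
        have := hT2 i1
        omega
      · rw [Function.update_of_ne h1, Function.update_of_ne h2]
        exact hT4 i1 i2 hle
    · intro j i'
      try dsimp only
      rcases eq_or_ne i' i with rfl | hne'
      · try dsimp only
        rw [Function.update_self]
        have := hT1 j
        omega
      · rw [Function.update_of_ne hne']; exact hT5 j i'
    · refine Or.inr (Or.inr ⟨i, ?_, ?_, ?_, rfl⟩)
      · rw [hTi]; rfl
      · simp [hTi]
      · intro i' hi'; exact Function.update_of_ne hi' _ _
  · have hall : ∀ i : Fin a, T.1.2 i ≠ 2 := fun i hh => hc ⟨i, hh⟩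
    have hcard0 : (Finset.univ.filter fun i : Fin a => T.1.2 i = 2).card = 0 := by
      rw [Finset.card_eq_zero, Finset.filter_eq_empty_iff]
      intro i _
      exact hall i
    have hpos : 0 < (Finset.univ.filter fun j : Fin b => (T.1.1 j).2 = 2).card := by
      rw [cC] at h; omega
    obtain ⟨j0, hj0⟩ := Finset.card_pos.mp hpos
    rw [Finset.mem_filter] at hj0
    have hne : (Finset.univ.filter fun j : Fin b => (T.1.1 j).2 = 2).Nonempty :=
      ⟨j0, by simp [hj0.2]⟩
    set j := (Finset.univ.filter fun j : Fin b => (T.1.1 j).2 = 2).max' hne with hjdef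
    have hTj2 : (T.1.1 j).2 = 2 := by
      have := Finset.max'_mem _ hne
      rw [Finset.mem_filter] at this
      exact this.2
    have hmax : ∀ j' : Fin b, (T.1.1 j').2 = 2 → j' ≤ j :=
      fun j' h' => Finset.le_max' _ j' (by simp [h'])
    have hTj : T.1.1 j = (1,2) := by
      have hb := hT1 j
      have heta : T.1.1 j = ((T.1.1 j).1, (T.1.1 j).2) := rfl
      rw [heta, hTj2]
      have : (T.1.1 j).1 = 1 := by omega
      rw [this]
    refine ⟨⟨(Function.update T.1.1 j (1,3), T.1.2), ⟨?_, hT2, ?_, hT4, ?_⟩⟩, ?_⟩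
    · intro j'
      try dsimp only
      rcases eq_or_ne j' j with rfl | hne'
      · simp
      · rw [Function.update_of_ne hne']; exact hT1 j'
    · intro j1 j2 hle
      try dsimp only
      by_cases h1 : j1 = j <;> by_cases h2 : j2 = j
      · subst h1; subst h2; exact ⟨le_refl _, le_refl _⟩
      · subst h1
        rw [Function.update_self, Function.update_of_ne h2]
        have hb := hT1 j2
        have hm := hT3 j j2 hle
        rw [hTj] at hm
        simp only at hm
        have hne2 : (T.1.1 j2).2 ≠ 2 := fun hh => h2 (le_antisymm (hmax j2 hh) hle)
        exact ⟨by omega, by omega⟩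
      · subst h2
        rw [Function.update_of_ne h1, Function.update_self]
        have hb := hT1 j1
        have hm := hT3 j1 j hle
        rw [hTj] at hm
        simp only at hm
        exact ⟨by omega, by omega⟩
      · rw [Function.update_of_ne h1, Function.update_of_ne h2]
        exact hT3 j1 j2 hle
    · intro j' i'
      try dsimp only
      rcases eq_or_ne j' j with rfl | hne'
      · try dsimp only
        rw [Function.update_self]
        exact (hT2 i').1
      · rw [Function.update_of_ne hne']; exact hT5 j' i'
    · refine Or.inr (Or.inl ⟨j, ?_, ?_, ?_, rfl⟩)
      · rw [hTj2]; rfl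
      · try dsimp only
        rw [Function.update_self, hTj]
      · intro j' hj'; exact Function.update_of_ne hj' _ _

lemma exD (T : {T : TabT a b // T ∈ SA2 a b}) (h : 0 < cD T.1) :
    ∃ U, covA2 a b TwoColor.beta T U := by
  obtain ⟨hT1, hT2, hT3, hT4, hT5⟩ := T.2
  by_cases hc : ∃ j : Fin b, T.1.1 j = (1,3)
  · obtain ⟨j0, hj0⟩ := hc
    have hne : (Finset.univ.filter fun j : Fin b => T.1.1 j = (1,3)).Nonempty :=
      ⟨j0, by simp [hj0]⟩
    set j := (Finset.univ.filter fun j : Fin b => T.1.1 j = (1,3)).min' hne with hjdef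
    have hTj : T.1.1 j = (1,3) := by
      have := Finset.min'_mem _ hne
      rw [Finset.mem_filter] at this
      exact this.2
    have hmin : ∀ j' : Fin b, T.1.1 j' = (1,3) → j ≤ j' :=
      fun j' h' => Finset.min'_le _ j' (by simp [h'])
    refine ⟨⟨(Function.update T.1.1 j (1,2), T.1.2), ⟨?_, hT2, ?_, hT4, ?_⟩⟩, ?_⟩
    · intro j'
      try dsimp only
      rcases eq_or_ne j' j with rfl | hne'
      · simp
      · rw [Function.update_of_ne hne']; exact hT1 j'
    · intro j1 j2 hle
      try dsimp only
      by_cases h1 : j1 = j <;> by_cases h2 : j2 = j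
      · subst h1; subst h2; exact ⟨le_refl _, le_refl _⟩
      · subst h1
        rw [Function.update_self, Function.update_of_ne h2]
        have hb := hT1 j2
        exact ⟨by omega, by omega⟩
      · subst h2
        rw [Function.update_of_ne h1, Function.update_self]
        have hb := hT1 j1
        have hm := hT3 j1 j hle
        rw [hTj] at hm
        simp only at hm
        have hne13 : T.1.1 j1 ≠ (1,3) := fun hh => h1 (le_antisymm hle (hmin j1 hh))
        have ht : ¬((T.1.1 j1).1 = 1 ∧ (T.1.1 j1).2 = 3) := by
          rintro ⟨u, v⟩
          apply hne13
          have heta : T.1.1 j1 = ((T.1.1 j1).1, (T.1.1 j1).2) := rfl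
          rw [heta, u, v]
        constructor
        · show (T.1.1 j1).1 ≤ 1
          omega
        · show (T.1.1 j1).2 ≤ 2
          by_contra hcon
          push_neg at hcon
          exact ht ⟨by omega, by omega⟩
      · rw [Function.update_of_ne h1, Function.update_of_ne h2]
        exact hT3 j1 j2 hle
    · intro j' i'
      try dsimp only
      rcases eq_or_ne j' j with rfl | hne'
      · try dsimp only
        rw [Function.update_self]
        exact (hT2 i').1
      · rw [Function.update_of_ne hne']; exact hT5 j' i'
    · refine Or.inr (Or.inl ⟨j, ?_, ?_, ?_, rfl⟩)
      · try dsimp only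
        rw [Function.update_self]
        rfl
      · try dsimp only
        rw [Function.update_self, hTj]
      · intro j' hj'
        exact (Function.update_of_ne hj' _ _).symm
  · have hcard0 : (Finset.univ.filter fun j : Fin b => T.1.1 j = (1,3)).card = 0 := by
      rw [Finset.card_eq_zero, Finset.filter_eq_empty_iff]
      intro j _
      exact fun hh => hc ⟨j, hh⟩
    have hpos : 0 < (Finset.univ.filter fun i : Fin a => T.1.2 i = 3).card := by
      rw [cD] at h; omega
    obtain ⟨i0, hi0⟩ := Finset.card_pos.mp hpos
    rw [Finset.mem_filter] at hi0
    have hne : (Finset.univ.filter fun i : Fin a => T.1.2 i = 3).Nonempty :=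
      ⟨i0, by simp [hi0.2]⟩
    set i := (Finset.univ.filter fun i : Fin a => T.1.2 i = 3).min' hne with hidef
    have hTi : T.1.2 i = 3 := by
      have := Finset.min'_mem _ hne
      rw [Finset.mem_filter] at this
      exact this.2
    have hmin : ∀ i' : Fin a, T.1.2 i' = 3 → i ≤ i' :=
      fun i' h' => Finset.min'_le _ i' (by simp [h'])
    refine ⟨⟨(T.1.1, Function.update T.1.2 i 2), ⟨hT1, ?_, hT3, ?_, ?_⟩⟩, ?_⟩
    · intro i'
      try dsimp only
      rcases eq_or_ne i' i with rfl | hne'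
      · simp
      · rw [Function.update_of_ne hne']; exact hT2 i'
    · intro i1 i2 hle
      try dsimp only
      by_cases h1 : i1 = i <;> by_cases h2 : i2 = i
      · subst h1; subst h2; exact le_refl _
      · subst h1
        rw [Function.update_self, Function.update_of_ne h2]
        have hm := hT4 i i2 hle
        rw [hTi] at hm
        omega
      · subst h2
        rw [Function.update_of_ne h1, Function.update_self]
        have hb := hT2 i1
        have hne3 : T.1.2 i1 ≠ 3 := fun hh => h1 (le_antisymm hle (hmin i1 hh))
        omega
      · rw [Function.update_of_ne h1, Function.update_of_ne h2]
        exact hT4 i1 i2 hle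
    · intro j i'
      try dsimp only
      rcases eq_or_ne i' i with rfl | hne'
      · try dsimp only
        rw [Function.update_self]
        have := hT1 j
        omega
      · rw [Function.update_of_ne hne']; exact hT5 j i'
    · refine Or.inr (Or.inr ⟨i, ?_, ?_, ?_, rfl⟩)
      · try dsimp only
        rw [Function.update_self]
        rfl
      · try dsimp only
        rw [Function.update_self, hTi]
      · intro i' hi'
        exact (Function.update_of_ne hi' _ _).symm

end A2Proof

/-- For all `a, b ≥ 0`, the edge-colored distributive lattice `L_A2(a,b)` of
`A2`-semistandard tableaux of shape `(a,b)` satisfies the structure condition for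
the `A2` Cartan matrix with rows `M_α = (2,−1)`, `M_β = (−1,2)`. -/
theorem A2_lattice_structure_condition (a b : ℕ) :
    StructureCondition (covA2 a b) MA2 := by
  have hra : ∀ u : {T : TabT a b // T ∈ SA2 a b},
      rhoOf (covA2 a b TwoColor.alpha) u = cA u.1 :=
    fun u => sSup_chainsEndingAt (covA2 a b TwoColor.alpha) (fun v : {T : TabT a b // T ∈ SA2 a b} => cA v.1)
      (fun s t h => (alpha_edge s t h).1) exA u
  have hda : ∀ u : {T : TabT a b // T ∈ SA2 a b},
      deltaOf (covA2 a b TwoColor.alpha) u = cB u.1 :=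
    fun u => sSup_chainsStartingAt (covA2 a b TwoColor.alpha) (fun v : {T : TabT a b // T ∈ SA2 a b} => cB v.1)
      (fun s t h => (alpha_edge s t h).2.1) exB u
  have hrb : ∀ u : {T : TabT a b // T ∈ SA2 a b},
      rhoOf (covA2 a b TwoColor.beta) u = cC u.1 :=
    fun u => sSup_chainsEndingAt (covA2 a b TwoColor.beta) (fun v : {T : TabT a b // T ∈ SA2 a b} => cC v.1)
      (fun s t h => (beta_edge s t h).1) exC u
  have hdb : ∀ u : {T : TabT a b // T ∈ SA2 a b},
      deltaOf (covA2 a b TwoColor.beta) u = cD u.1 :=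
    fun u => sSup_chainsStartingAt (covA2 a b TwoColor.beta) (fun v : {T : TabT a b // T ∈ SA2 a b} => cD v.1)
      (fun s t h => (beta_edge s t h).2.1) exD u
  intro c s t hcov
  cases c with
  | alpha =>
    obtain ⟨e1, e2, e3⟩ := alpha_edge s t hcov
    simp only [wtOf, MA2, hra, hda, hrb, hdb, Prod.mk_add_mk, Prod.mk.injEq]
    constructor <;> omega
  | beta =>
    obtain ⟨e1, e2, e3⟩ := beta_edge s t hcov
    simp only [wtOf, MA2, hra, hda, hrb, hdb, Prod.mk_add_mk, Prod.mk.injEq]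
    constructor <;> omega
end
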